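/- Every non-vertical line intersects either a downward ray from a vertex of the upper hull of P_U or an upward ray from a vertex of the lower hull of P_L, provided the upper convex hull of P_U intersects the lower convex hull of P_L. In other words, if the corresponding family of half-planes covers the plane, then every non-vertical line meets at least one dual ray. -/
import Mathlib


/-- `q` is a vertex of the upper convex hull of `P`. -/
def UpHullVertex (P : Set (ℝ × ℝ)) (q : ℝ × ℝ) : Prop :=
  q ∈ P ∧ ∃ m k : ℝ, q.2 = m * q.1 + k ∧ ∀ u ∈ P, u.2 ≤ m * u.1 + k

/-- `q` is a vertex of the lower convex hull of `P`. -/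
def LowHullVertex (P : Set (ℝ × ℝ)) (q : ℝ × ℝ) : Prop :=
  q ∈ P ∧ ∃ m k : ℝ, q.2 = m * q.1 + k ∧ ∀ u ∈ P, m * u.1 + k ≤ u.2

/-- Upper convex hull: convex hull of the downward vertical rays from `P`. -/
def uphull (P : Set (ℝ × ℝ)) : Set (ℝ × ℝ) :=
  convexHull ℝ {x : ℝ × ℝ | ∃ p ∈ P, ∃ t : ℝ, 0 ≤ t ∧ x = p - t • ((0 : ℝ), (1 : ℝ))}

/-- Lower convex hull: convex hull of the upward vertical rays from `P`. -/
def lowhull (P : Set (ℝ × ℝ)) : Set (ℝ × ℝ) :=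
  convexHull ℝ {x : ℝ × ℝ | ∃ p ∈ P, ∃ t : ℝ, 0 ≤ t ∧ x = p + t • ((0 : ℝ), (1 : ℝ))}

lemma linmap (m : ℝ) : IsLinearMap ℝ (fun x : ℝ × ℝ => x.2 - m * x.1) := by
  constructor
  · intro x y; simp [Prod.fst_add, Prod.snd_add]; ring
  · intro c x; simp [Prod.smul_fst, Prod.smul_snd, smul_eq_mul]; ring

/-- If the upper hull of `P_U` meets the lower hull of `P_L`, then every
non-vertical line `y = mx + k` meets a downward ray at an upper-hull vertex of
`P_U` or an upward ray at a lower-hull vertex of `P_L`. -/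
theorem every_line_meets_some_ray
    (PU PL : Set (ℝ × ℝ)) (hU : PU.Finite) (hL : PL.Finite)
    (hUne : PU.Nonempty) (hLne : PL.Nonempty)
    (hint : (uphull PU ∩ lowhull PL).Nonempty) :
    ∀ m k : ℝ,
      (∃ q : ℝ × ℝ, UpHullVertex PU q ∧ m * q.1 + k ≤ q.2) ∨
      (∃ q : ℝ × ℝ, LowHullVertex PL q ∧ q.2 ≤ m * q.1 + k) := by
  intro m k
  set f : ℝ × ℝ → ℝ := fun x => x.2 - m * x.1 with hf
  obtain ⟨a, haPU, hamax⟩ := Set.exists_max_image PU f hU hUne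
  obtain ⟨b, hbPL, hbmin⟩ := Set.exists_min_image PL f hL hLne
  by_contra h
  push_neg at h
  obtain ⟨h1, h2⟩ := h
  -- a is an upper hull vertex, b a lower hull vertex
  have hav : UpHullVertex PU a :=
    ⟨haPU, m, f a, by simp [hf], fun u hu => by have := hamax u hu; simp [hf] at this ⊢; linarith⟩
  have hbv : LowHullVertex PL b :=
    ⟨hbPL, m, f b, by simp [hf], fun u hu => by have := hbmin u hu; simp [hf] at this ⊢; linarith⟩
  have ha' : f a < k := by have := h1 a hav; simp [hf]; linarith
  have hb' : k < f b := by have := h2 b hbv; simp [hf]; linarith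
  obtain ⟨x, hxU, hxL⟩ := hint
  -- uphull PU ⊆ {x | f x ≤ f a}
  have hUsub : uphull PU ⊆ {x | f x ≤ f a} := by
    apply convexHull_min _ (convex_halfSpace_le (linmap m) (f a))
    rintro y ⟨p, hp, t, ht, rfl⟩
    have := hamax p hp
    simp only [hf, Set.mem_setOf_eq, Prod.snd_sub, Prod.fst_sub, Prod.smul_fst, Prod.smul_snd,
      smul_eq_mul] at this ⊢
    nlinarith
  have hLsub : lowhull PL ⊆ {x | f b ≤ f x} := by
    apply convexHull_min _ (convex_halfSpace_ge (linmap m) (f b))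
    rintro y ⟨p, hp, t, ht, rfl⟩
    have := hbmin p hp
    simp only [hf, Set.mem_setOf_eq, Prod.snd_add, Prod.fst_add, Prod.smul_fst, Prod.smul_snd,
      smul_eq_mul] at this ⊢
    nlinarith
  have := hUsub hxU
  have := hLsub hxL
  simp only [Set.mem_setOf_eq] at *
  linarith
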